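/- arXiv:2410.03279 — 5 statements merged into one kernel-verified Lean document; each statement's English description precedes it below -/
import Mathlib

section
/- Let k ∈ ℕ be even with k ≥ 4. Then the function f : ℝ → ℝ given by f(t) = t^k log|t| for t ≠ 0 and f(0) = 0 is not analytic at 0. -/
open Filter Real Topology

/-- For `m ≥ 1`, `z^m * log |z| → 0` along `𝓝[≠] 0`. -/
lemma aux_pow_log_tendsto (m : ℕ) (hm : 1 ≤ m) :
    Tendsto (fun z : ℝ => z ^ m * Real.log |z|) (𝓝[≠] (0:ℝ)) (𝓝 0) := by
  have h1 : Tendsto (fun x : ℝ => Real.log x * x ^ (m:ℝ)) (𝓝[>] (0:ℝ)) (𝓝 0) :=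
    tendsto_log_mul_rpow_nhdsGT_zero (by exact_mod_cast hm.trans_lt' zero_lt_one)
  have h2 : Tendsto (fun z : ℝ => Real.log |z| * |z| ^ (m:ℝ)) (𝓝[≠] (0:ℝ)) (𝓝 0) :=
    h1.comp tendsto_abs_nhdsNE_zero
  refine squeeze_zero_norm (fun z => ?_) (by simpa using h2.abs)
  simp [abs_mul, abs_pow, Real.log_abs, mul_comm]

/-- For `k` even with `k ≥ 4`, the function `t ↦ t^k log|t|`
(with value `0` at `t = 0`, which is automatic since `Real.log 0 = 0`)
is not (real) analytic at `0`. -/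
theorem pow_mul_log_abs_not_analyticAt_zero (k : ℕ) (hk : Even k) (hk4 : 4 ≤ k) :
    ¬ AnalyticAt ℝ (fun t : ℝ => t ^ k * Real.log |t|) 0 := by
  intro h
  have hne : (𝓝[≠] (0:ℝ)).NeBot := inferInstance
  -- the order is not ⊤
  have htop : analyticOrderAt (fun t : ℝ => t ^ k * Real.log |t|) 0 ≠ ⊤ := by
    intro ht
    have hz : ∀ᶠ z in 𝓝 (0:ℝ), z ^ k * Real.log |z| = 0 := analyticOrderAt_eq_top.mp ht
    obtain ⟨ε, hε, hball⟩ := Metric.eventually_nhds_iff.mp hz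
    set t : ℝ := min (ε / 2) (1/2) with htdef
    have ht0 : 0 < t := lt_min (by linarith) (by norm_num)
    have ht1 : t < 1 := lt_of_le_of_lt (min_le_right _ _) (by norm_num)
    have htε : dist t 0 < ε := by
      rw [Real.dist_eq, sub_zero, abs_of_pos ht0]
      exact lt_of_le_of_lt (min_le_left _ _) (by linarith)
    have := hball htε
    have hlog : Real.log |t| < 0 := by
      rw [abs_of_pos ht0]
      exact Real.log_neg ht0 ht1
    have hpow : (0:ℝ) < t ^ k := pow_pos ht0 k
    nlinarith [this]
  -- get the normal form
  set n : ℕ := (analyticOrderAt (fun t : ℝ => t ^ k * Real.log |t|) 0).toNat with hn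
  have horder : analyticOrderAt (fun t : ℝ => t ^ k * Real.log |t|) 0 = (n : ℕ∞) := (ENat.coe_toNat htop).symm
  obtain ⟨g, hg, hg0, hfg⟩ := (h.analyticOrderAt_eq_natCast (n := n)).mp horder
  have hfg' : ∀ᶠ z in 𝓝[≠] (0:ℝ), z ^ k * Real.log |z| = z ^ n * g z := by
    filter_upwards [hfg.filter_mono nhdsWithin_le_nhds] with z hz
    simpa [sub_zero, smul_eq_mul] using hz
  rcases le_or_gt k n with hkn | hnk
  · -- log |z| = z^(n-k) * g z near 0, finite limit, contradiction with log → -∞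
    have heq : ∀ᶠ z in 𝓝[≠] (0:ℝ), Real.log |z| = z ^ (n - k) * g z := by
      filter_upwards [hfg', self_mem_nhdsWithin] with z hz hz0
      have hz0' : z ≠ 0 := hz0
      have hzk : z ^ k ≠ 0 := pow_ne_zero _ hz0'
      have : z ^ n = z ^ k * z ^ (n - k) := by
        rw [← pow_add, Nat.add_sub_cancel' hkn]
      rw [this, mul_assoc] at hz
      exact mul_left_cancel₀ hzk hz
    have hlim : Tendsto (fun z : ℝ => z ^ (n - k) * g z) (𝓝[≠] (0:ℝ))
        (𝓝 ((0:ℝ) ^ (n - k) * g 0)) := by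
      exact ((continuous_pow (n-k)).continuousAt.mul hg.continuousAt).continuousWithinAt
    have hlog : Tendsto (fun z : ℝ => Real.log |z|) (𝓝[≠] (0:ℝ)) atBot := by
      simpa [Real.log_abs] using Real.tendsto_log_nhdsNE_zero
    exact not_tendsto_atBot_of_tendsto_nhds (hlim.congr' (heq.mono fun z hz => hz.symm)) hlog
  · -- g z = z^(k-n) * log |z| near 0, tends to 0, so g 0 = 0, contradiction
    have heq : ∀ᶠ z in 𝓝[≠] (0:ℝ), g z = z ^ (k - n) * Real.log |z| := by
      filter_upwards [hfg', self_mem_nhdsWithin] with z hz hz0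
      have hz0' : z ≠ 0 := hz0
      have hzn : z ^ n ≠ 0 := pow_ne_zero _ hz0'
      have : z ^ k = z ^ n * z ^ (k - n) := by
        rw [← pow_add, Nat.add_sub_cancel' hnk.le]
      rw [this, mul_assoc] at hz
      exact (mul_left_cancel₀ hzn hz).symm
    have hglim : Tendsto g (𝓝[≠] (0:ℝ)) (𝓝 (g 0)) := hg.continuousAt.continuousWithinAt
    have h0 : Tendsto g (𝓝[≠] (0:ℝ)) (𝓝 0) :=
      (aux_pow_log_tendsto (k - n) (by omega)).congr' (heq.mono fun z hz => hz.symm)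
    exact hg0 (tendsto_nhds_unique hglim h0)
end

section
/- Let k ∈ ℕ be even with k ≥ 4. Then the function f : ℝ → ℝ given by f(t) = t·|t|^{k−2}·(k log|t| + 1) for t ≠ 0 and f(0) = 0 is not analytic at 0. -/
open Filter Real Topology

/-- For `k` even with `k ≥ 4`, the function
`t ↦ t·|t|^(k-2)·(k log|t| + 1)` (with value `0` at `t = 0`, automatic since the
first factor vanishes) is not (real) analytic at `0`. -/
theorem tps_normal_restriction_not_analyticAt_zero (k : ℕ) (hk : Even k) (hk4 : 4 ≤ k) :
    ¬ AnalyticAt ℝ (fun t : ℝ => t * |t| ^ (k - 2) * ((k : ℝ) * Real.log |t| + 1)) 0 := by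
  intro hf
  have hkpos : (0 : ℝ) < k := by positivity
  have hev : Even (k - 2) := Even.tsub hk (by norm_num)
  set g : ℝ → ℝ := fun t => t * |t| ^ (k - 2) * ((k : ℝ) * Real.log |t| + 1) - t ^ (k - 1)
    with hg_def
  have hg : AnalyticAt ℝ g 0 := hf.sub (analyticAt_id.pow (k - 1))
  have hg_eq : ∀ t : ℝ, g t = (k : ℝ) * t ^ (k - 1) * Real.log |t| := by
    intro t
    have h1 : |t| ^ (k - 2) = t ^ (k - 2) := hev.pow_abs t
    have h2 : t ^ (k - 1) = t * t ^ (k - 2) := by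
      have : k - 1 = (k - 2) + 1 := by omega
      rw [this, pow_succ]; ring
    simp only [hg_def, h1, h2]; ring
  -- order is not ⊤
  have h_ord_ne_top : analyticOrderAt g 0 ≠ ⊤ := by
    intro htop
    rw [analyticOrderAt_eq_top] at htop
    rw [Metric.eventually_nhds_iff] at htop
    replace h := htop
    obtain ⟨ε, hε, h⟩ := h
    set t : ℝ := min (ε / 2) (1 / 2) with ht_def
    have ht0 : 0 < t := by positivity
    have ht1 : t < 1 := lt_of_le_of_lt (min_le_right _ _) (by norm_num)
    have := h (y := t) (by
      simp only [Real.dist_eq, sub_zero, abs_of_pos ht0]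
      exact lt_of_le_of_lt (min_le_left _ _) (by linarith))
    rw [hg_eq] at this
    have hlog : Real.log |t| < 0 := Real.log_neg (by rwa [abs_of_pos ht0])
      (by rwa [abs_of_pos ht0])
    have hpow : (0:ℝ) < t ^ (k - 1) := pow_pos ht0 _
    have hneg := mul_neg_of_pos_of_neg (mul_pos hkpos hpow) hlog
    linarith
  obtain ⟨n, hn⟩ := WithTop.ne_top_iff_exists.mp h_ord_ne_top
  obtain ⟨h, hh, hh0, hfh⟩ := (hg.analyticOrderAt_eq_natCast (n := n)).mp hn.symm
  -- on the right neighborhood of 0 : t^n * h t = k * t^(k-1) * log t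
  have key : ∀ᶠ t in 𝓝[>] (0:ℝ), t ^ n * h t = (k : ℝ) * t ^ (k - 1) * Real.log t := by
    filter_upwards [nhdsWithin_le_nhds hfh, self_mem_nhdsWithin] with t ht ht0
    rw [hg_eq, abs_of_pos ht0] at ht
    simp only [sub_zero, smul_eq_mul] at ht
    exact ht.symm
  have hne : (𝓝[>] (0:ℝ)).NeBot := nhdsGT_neBot 0
  have hhc : Tendsto h (𝓝[>] (0:ℝ)) (𝓝 (h 0)) :=
    (hh.continuousAt.tendsto).mono_left nhdsWithin_le_nhds
  rcases le_or_gt (n + 1) (k - 1) with hcase | hcase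
  · -- n ≤ k - 2 : h t = k * t^(k-1-n) * log t → 0 so h 0 = 0, contradiction
    set m : ℕ := k - 1 - n with hm_def
    have hm1 : 1 ≤ m := by omega
    have hkn : k - 1 = n + m := by omega
    have heq : ∀ᶠ t in 𝓝[>] (0:ℝ), h t = (k : ℝ) * (Real.log t * t ^ m) := by
      filter_upwards [key, self_mem_nhdsWithin] with t ht ht0
      have htn : t ^ n ≠ 0 := pow_ne_zero _ (ne_of_gt ht0)
      apply mul_left_cancel₀ htn
      rw [hkn, pow_add] at ht
      linear_combination ht
    have hlim : Tendsto (fun t : ℝ => (k : ℝ) * (Real.log t * t ^ m)) (𝓝[>] (0:ℝ)) (𝓝 0) := by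
      have h1 : Tendsto (fun t : ℝ => Real.log t * t ^ (m : ℝ)) (𝓝[>] (0:ℝ)) (𝓝 0) :=
        tendsto_log_mul_rpow_nhdsGT_zero (by exact_mod_cast hm1 : (0:ℝ) < (m:ℝ))
      have h2 : Tendsto (fun t : ℝ => Real.log t * t ^ m) (𝓝[>] (0:ℝ)) (𝓝 0) := by
        apply h1.congr'
        filter_upwards [self_mem_nhdsWithin] with t ht0
        rw [Real.rpow_natCast]
      simpa using h2.const_mul (k : ℝ)
    have : h 0 = 0 := tendsto_nhds_unique (hhc.congr' heq) hlim
    exact hh0 this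
  · -- n ≥ k - 1 : t^(n-(k-1)) * h t = k * log t → -∞ but also converges, contradiction
    set m : ℕ := n - (k - 1) with hm_def
    have hkn : n = (k - 1) + m := by omega
    have heq : ∀ᶠ t in 𝓝[>] (0:ℝ), t ^ m * h t = (k : ℝ) * Real.log t := by
      filter_upwards [key, self_mem_nhdsWithin] with t ht ht0
      have htn : t ^ (k - 1) ≠ 0 := pow_ne_zero _ (ne_of_gt ht0)
      apply mul_left_cancel₀ htn
      rw [hkn, pow_add] at ht
      linear_combination ht
    have hlim : Tendsto (fun t : ℝ => t ^ m * h t) (𝓝[>] (0:ℝ)) (𝓝 ((0:ℝ) ^ m * h 0)) :=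
      (((continuous_pow m).tendsto 0).mono_left nhdsWithin_le_nhds).mul hhc
    have hlim2 : Tendsto (fun t : ℝ => (k : ℝ) * Real.log t) (𝓝[>] (0:ℝ)) (𝓝 ((0:ℝ) ^ m * h 0)) :=
      hlim.congr' heq
    have hbot : Tendsto (fun t : ℝ => (k : ℝ) * Real.log t) (𝓝[>] (0:ℝ)) atBot :=
      Real.tendsto_log_nhdsGT_zero.const_mul_atBot hkpos
    exact not_tendsto_atBot_of_tendsto_nhds hlim2 hbot
end

section
/- Let d ≥ 1, let U ⊆ ℝ^d be a nonempty open connected set, and let f : ℝ^d → ℝ be analytic at every point of U. If f is not identically zero on U, then the zero set {x ∈ U : f(x) = 0} has d-dimensional Lebesgue measure zero. -/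
open MeasureTheory Filter Set
open scoped Topology

/-- The continuous linear map `(t, y) ↦ Fin.cons t y`. -/
noncomputable def consL (n : ℕ) : (ℝ × (Fin n → ℝ)) →L[ℝ] (Fin (n + 1) → ℝ) :=
  LinearMap.toContinuousLinearMap
    { toFun := fun p => Fin.cons p.1 p.2
      map_add' := by
        intro p q
        funext i
        refine Fin.cases ?_ ?_ i <;> simp
      map_smul' := by
        intro c p
        funext i
        refine Fin.cases ?_ ?_ i <;> simp }

lemma consL_apply (n : ℕ) (p : ℝ × (Fin n → ℝ)) : consL n p = Fin.cons p.1 p.2 := rfl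

lemma analyticAt_consLeft {n : ℕ} (y : Fin n → ℝ) (t₀ : ℝ) :
    AnalyticAt ℝ (fun t : ℝ => (Fin.cons t y : Fin (n + 1) → ℝ)) t₀ := by
  have h : AnalyticAt ℝ ((consL n) ∘ (fun t : ℝ => (t, y))) t₀ :=
    ((consL n).analyticAt _).comp (analyticAt_id.prod analyticAt_const)
  exact h

lemma analyticAt_consRight {n : ℕ} (t : ℝ) (y₀ : Fin n → ℝ) :
    AnalyticAt ℝ (fun y : Fin n → ℝ => (Fin.cons t y : Fin (n + 1) → ℝ)) y₀ := by
  have h : AnalyticAt ℝ ((consL n) ∘ (fun y : Fin n → ℝ => (t, y))) y₀ :=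
    ((consL n).analyticAt _).comp (analyticAt_const.prod analyticAt_id)
  exact h

lemma cons_mem_ball {n : ℕ} {x₀ : Fin (n + 1) → ℝ} {ε : ℝ} (hε : 0 < ε) (t : ℝ)
    (y : Fin n → ℝ) :
    (Fin.cons t y : Fin (n + 1) → ℝ) ∈ Metric.ball x₀ ε ↔
      t ∈ Metric.ball (x₀ 0) ε ∧ y ∈ Metric.ball (Fin.tail x₀) ε := by
  rw [Metric.mem_ball, Metric.mem_ball, Metric.mem_ball, dist_pi_lt_iff hε,
    dist_pi_lt_iff hε, Fin.forall_fin_succ]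
  simp [Fin.tail]

/-- Key induction: the zero set of a function analytic on an open set, which is not eventually
zero at any point of the set, is Lebesgue-null. -/
lemma aux_zero_set (n : ℕ) :
    ∀ (F : (Fin n → ℝ) → ℝ) (U : Set (Fin n → ℝ)), IsOpen U →
      (∀ x ∈ U, AnalyticAt ℝ F x) → (∀ x ∈ U, ¬ ∀ᶠ y in 𝓝 x, F y = 0) →
      volume {x ∈ U | F x = 0} = 0 := by
  induction n with
  | zero =>
      intro F U hUo hF hne
      have h : {x ∈ U | F x = 0} = ∅ := by
        ext x
        simp only [mem_setOf_eq, mem_empty_iff_false, iff_false, not_and]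
        intro hxU hFx
        exact hne x hxU (Filter.Eventually.of_forall fun y => by
          rw [Subsingleton.elim y x]; exact hFx)
      rw [h]
      simp
  | succ n IH =>
      intro F U hUo hF hne
      have hVo : IsOpen {x | x ∈ U ∧ F x ≠ 0} := by
        rw [isOpen_iff_mem_nhds]
        rintro x ⟨hxU, hxF⟩
        have h1 : ∀ᶠ y in 𝓝 x, F y ≠ 0 := (hF x hxU).continuousAt.eventually_ne hxF
        filter_upwards [hUo.mem_nhds hxU, h1] with y h2 h3 using ⟨h2, h3⟩
      have hZm : MeasurableSet {x ∈ U | F x = 0} := by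
        have h : {x ∈ U | F x = 0} = U \ {x | x ∈ U ∧ F x ≠ 0} := by
          ext x
          by_cases hx : F x = 0 <;> simp [hx]
        rw [h]
        exact hUo.measurableSet.diff hVo.measurableSet
      refine measure_null_of_locally_null _ fun x₀ hx₀ => ?_
      have hx₀U : x₀ ∈ U := hx₀.1
      obtain ⟨ε, hε, hball⟩ := Metric.isOpen_iff.mp hUo x₀ hx₀U
      refine ⟨{x ∈ U | F x = 0} ∩ Metric.ball x₀ ε,
        Filter.inter_mem self_mem_nhdsWithin
          (mem_nhdsWithin_of_mem_nhds (Metric.ball_mem_nhds x₀ hε)), ?_⟩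
      set c : ℝ := x₀ 0 with hc
      set w : Fin n → ℝ := Fin.tail x₀ with hw
      set Z : Set (Fin (n + 1) → ℝ) := {x ∈ U | F x = 0} with hZdef
      set S : Set (ℝ × (Fin n → ℝ)) := (fun p : ℝ × (Fin n → ℝ) =>
        (Fin.cons p.1 p.2 : Fin (n + 1) → ℝ)) ⁻¹' (Z ∩ Metric.ball x₀ ε) with hSdef
      have hSm : MeasurableSet S := by
        have hcont : Continuous (fun p : ℝ × (Fin n → ℝ) =>
            (Fin.cons p.1 p.2 : Fin (n + 1) → ℝ)) := (consL n).continuous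
        exact hcont.measurable (hZm.inter measurableSet_ball)
      -- transfer the measure computation to the product space
      have hpre : (MeasurableEquiv.piFinSuccAbove (fun _ : Fin (n + 1) => ℝ) 0) ⁻¹' S
          = Z ∩ Metric.ball x₀ ε := by
        ext x
        have hx : (Fin.cons (x 0) (fun j => x ((0 : Fin (n + 1)).succAbove j)) :
            Fin (n + 1) → ℝ) = x := by
          funext i
          refine Fin.cases ?_ ?_ i
          · simp
          · intro j
            simp [Fin.zero_succAbove]
        show (Fin.cons (x 0) (fun j => x ((0 : Fin (n + 1)).succAbove j)) :
            Fin (n + 1) → ℝ) ∈ Z ∩ Metric.ball x₀ ε ↔ _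
        rw [hx]
      have MP := volume_preserving_piFinSuccAbove (fun _ : Fin (n + 1) => ℝ) 0
      have key : volume (Z ∩ Metric.ball x₀ ε) = volume S := by
        rw [← hpre]
        exact MP.measure_preimage hSm.nullMeasurableSet
      rw [key, Measure.volume_eq_prod, Measure.measure_prod_null hSm]
      -- the bad set of slices
      set T : Set ℝ := {t : ℝ | t ∈ Metric.ball c ε ∧
        ∀ y ∈ Metric.ball w ε, F (Fin.cons t y) = 0} with hTdef
      have hTiso : ∀ t ∈ T, ∀ᶠ s in 𝓝[≠] t, s ∉ T := by
        intro t ht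
        by_contra hcon
        rw [Filter.not_eventually] at hcon
        simp only [not_not] at hcon
        have hzero : ∀ y ∈ Metric.ball w ε, ∀ s ∈ Metric.ball c ε,
            F (Fin.cons s y) = 0 := by
          intro y hy
          have hG : AnalyticOnNhd ℝ (fun s : ℝ => F (Fin.cons s y)) (Metric.ball c ε) := by
            intro s hs
            have hmem : (Fin.cons s y : Fin (n + 1) → ℝ) ∈ Metric.ball x₀ ε :=
              (cons_mem_ball hε s y).mpr ⟨hs, hy⟩
            exact AnalyticAt.comp (g := F) (f := fun t : ℝ => (Fin.cons t y : Fin (n + 1) → ℝ))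
              (hF _ (hball hmem)) (analyticAt_consLeft y s)
          have hfr : ∃ᶠ s in 𝓝[≠] t, (fun s : ℝ => F (Fin.cons s y)) s = 0 :=
            hcon.mono fun s hs => hs.2 y hy
          exact fun s hs =>
            hG.eqOn_zero_of_preconnected_of_frequently_eq_zero
              ((convex_ball c ε).isPreconnected) ht.1 hfr hs
        apply hne x₀ hx₀U
        filter_upwards [Metric.ball_mem_nhds x₀ hε] with z hz
        have h1 : (Fin.cons (z 0) (Fin.tail z) : Fin (n + 1) → ℝ) ∈ Metric.ball x₀ ε := by
          rwa [Fin.cons_self_tail]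
        have h2 := (cons_mem_ball hε (z 0) (Fin.tail z)).mp h1
        have h3 := hzero (Fin.tail z) h2.2 (z 0) h2.1
        rwa [Fin.cons_self_tail] at h3
      have hTc : T.Countable := by
        have h : ∀ t : ℝ, ∃ V : Set ℝ, t ∈ T → V ∈ 𝓝 t ∧ V ∩ T ⊆ {t} := by
          intro t
          by_cases ht : t ∈ T
          · have h1 := hTiso t ht
            rw [eventually_nhdsWithin_iff] at h1
            refine ⟨{s | s ∈ ({t} : Set ℝ)ᶜ → s ∉ T}, fun _ => ⟨h1, ?_⟩⟩
            rintro s ⟨hs1, hs2⟩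
            by_contra hst
            exact hs1 hst hs2
          · exact ⟨Set.univ, fun h => absurd h ht⟩
        choose V hV using h
        obtain ⟨s, hsT, hsc, hcov⟩ := TopologicalSpace.countable_cover_nhdsWithin
          (f := V) (s := T) (fun t ht => mem_nhdsWithin_of_mem_nhds (hV t ht).1)
        refine hsc.mono ?_
        intro t ht
        obtain ⟨x, hx⟩ := Set.mem_iUnion.mp (hcov ht)
        obtain ⟨hxs, hxV⟩ := Set.mem_iUnion.mp hx
        have := (hV x (hsT hxs)).2 ⟨hxV, ht⟩
        rw [Set.mem_singleton_iff] at this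
        rwa [this]
      have hT0 : ∀ᵐ t : ℝ, t ∉ T := by
        rw [ae_iff]
        have h : {a : ℝ | ¬ a ∉ T} = T := by ext a; simp
        rw [h]
        exact hTc.measure_zero _
      filter_upwards [hT0] with t ht
      simp only [Pi.zero_apply]
      by_cases htb : t ∈ Metric.ball c ε
      · have hy₀ : ∃ y ∈ Metric.ball w ε, F (Fin.cons t y) ≠ 0 := by
          by_contra hcon
          push_neg at hcon
          exact ht ⟨htb, hcon⟩
        obtain ⟨y₀, hy₀b, hy₀⟩ := hy₀
        have hsub : Prod.mk t ⁻¹' S ⊆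
            {y ∈ Metric.ball w ε | F (Fin.cons t y) = 0} := by
          intro y hy
          obtain ⟨hyZ, hyB⟩ := hy
          exact ⟨((cons_mem_ball hε t y).mp hyB).2, hyZ.2⟩
        refine measure_mono_null hsub ?_
        have hFt : ∀ y ∈ Metric.ball w ε,
            AnalyticAt ℝ (fun y => F (Fin.cons t y)) y := by
          intro y hy
          have hmem := (cons_mem_ball hε t y).mpr ⟨htb, hy⟩
          exact AnalyticAt.comp (g := F) (f := fun y : Fin n → ℝ => (Fin.cons t y : Fin (n + 1) → ℝ))
            (hF _ (hball hmem)) (analyticAt_consRight t y)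
        refine IH _ _ Metric.isOpen_ball hFt ?_
        intro y hy hev
        have heq := AnalyticOnNhd.eqOn_zero_of_preconnected_of_eventuallyEq_zero
          (f := fun y => F (Fin.cons t y)) (fun z hz => hFt z hz)
          ((convex_ball w ε).isPreconnected) hy hev
        exact hy₀ (heq hy₀b)
      · have hempty : Prod.mk t ⁻¹' S = ∅ := by
          ext y
          simp only [Set.mem_preimage, Set.mem_empty_iff_false, iff_false]
          intro hy
          exact htb ((cons_mem_ball hε t y).mp hy.2).1
        rw [hempty]
        simp

/-- Let `U ⊆ ℝ^d` (`d ≥ 1`) be a nonempty open connected set and let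
`f : ℝ^d → ℝ` be analytic at every point of `U`. If `f` is not identically zero on `U`,
then the zero set `{x ∈ U : f x = 0}` has Lebesgue measure zero. -/
theorem zero_set_of_analytic_measure_zero (d : ℕ) (hd : 1 ≤ d)
    (U : Set (EuclideanSpace ℝ (Fin d))) (hUo : IsOpen U) (hUc : IsConnected U)
    (f : EuclideanSpace ℝ (Fin d) → ℝ) (hf : ∀ x ∈ U, AnalyticAt ℝ f x)
    (hne : ∃ x ∈ U, f x ≠ 0) :
    volume {x ∈ U | f x = 0} = 0 := by
  classical
  have hnev : ∀ x ∈ U, ¬ ∀ᶠ y in 𝓝 x, f y = 0 := by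
    intro x hx hev
    obtain ⟨x1, hx1, hfx1⟩ := hne
    exact hfx1 (AnalyticOnNhd.eqOn_zero_of_preconnected_of_eventuallyEq_zero
      (fun z hz => hf z hz) hUc.isPreconnected hx hev hx1)
  set e : EuclideanSpace ℝ (Fin d) ≃L[ℝ] (Fin d → ℝ) := EuclideanSpace.equiv (Fin d) ℝ with he
  set F : (Fin d → ℝ) → ℝ := fun x => f (e.symm x) with hFdef
  set U' : Set (Fin d → ℝ) := e.symm ⁻¹' U with hU'def
  have hU'o : IsOpen U' := hUo.preimage e.symm.continuous
  have hF : ∀ x ∈ U', AnalyticAt ℝ F x := fun x hx =>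
    (hf _ hx).comp ((e.symm : (Fin d → ℝ) →L[ℝ] EuclideanSpace ℝ (Fin d)).analyticAt x)
  have hFnev : ∀ x ∈ U', ¬ ∀ᶠ y in 𝓝 x, F y = 0 := by
    intro x hx hev
    apply hnev (e.symm x) hx
    have hmap : Filter.map e.symm (𝓝 x) = 𝓝 (e.symm x) :=
      e.symm.toHomeomorph.map_nhds_eq x
    rw [← hmap, Filter.eventually_map]
    exact hev
  have haux := aux_zero_set d F U' hU'o hF hFnev
  have hVo : IsOpen {x | x ∈ U ∧ f x ≠ 0} := by
    rw [isOpen_iff_mem_nhds]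
    rintro x ⟨hxU, hxF⟩
    have h1 : ∀ᶠ y in 𝓝 x, f y ≠ 0 := (hf x hxU).continuousAt.eventually_ne hxF
    filter_upwards [hUo.mem_nhds hxU, h1] with y h2 h3 using ⟨h2, h3⟩
  have hZm : MeasurableSet {x ∈ U | f x = 0} := by
    have h : {x ∈ U | f x = 0} = U \ {x | x ∈ U ∧ f x ≠ 0} := by
      ext x
      by_cases hx : f x = 0 <;> simp [hx]
    rw [h]
    exact hUo.measurableSet.diff hVo.measurableSet
  have MP := (EuclideanSpace.volume_preserving_symm_measurableEquiv_toLp (Fin d)).symm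
  have hpre : (MeasurableEquiv.toLp 2 (Fin d → ℝ)).symm.symm ⁻¹' {x ∈ U | f x = 0}
      = {x ∈ U' | F x = 0} := rfl
  calc volume {x ∈ U | f x = 0}
      = volume ((MeasurableEquiv.toLp 2 (Fin d → ℝ)).symm.symm ⁻¹' {x ∈ U | f x = 0}) :=
        (MP.measure_preimage hZm.nullMeasurableSet).symm
    _ = volume {x ∈ U' | F x = 0} := by rw [hpre]
    _ = 0 := haux
end

section
/- Let d ≥ 2, let c_{ij} ∈ ℝ (1 ≤ i,j ≤ d) satisfy the ellipticity condition Σ_{i,j} c_{ij} ξ_i ξ_j ≠ 0 for every ξ ∈ ℝ^d \ {0}, let b ∈ ℝ^d, ρ ∈ ℝ, P ∈ ℝ^d, and let k ∈ ℕ be odd with k > 2. Define g : ℝ^d → ℝ by g(A) = Σ_{i,j} c_{ij} ∂²_{a_i a_j}[‖P−A‖^k] + Σ_j b_j ∂_{a_j}[‖P−A‖^k] + ρ ‖P−A‖^k for A ≠ P (derivatives in the A variable), and g(P) = 0. Then g is not analytic at A = P. -/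
open Real
open scoped RealInnerProductSpace

variable {E : Type*} [NormedAddCommGroup E] [InnerProductSpace ℝ E]

theorem myHasFDerivAt_norm_rpow {x : E} (hx : x ≠ 0) (p : ℝ) :
    HasFDerivAt (fun x : E ↦ ‖x‖ ^ p) ((p * ‖x‖ ^ (p - 2)) • innerSL ℝ x) x := by
  apply HasStrictFDerivAt.hasFDerivAt
  convert (hasStrictFDerivAt_norm_sq x).rpow_const (p := p / 2) (by simp [hx]) using 0
  simp_rw [← Real.rpow_natCast_mul (norm_nonneg _), ← Nat.cast_smul_eq_nsmul ℝ, smul_smul]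
  ring_nf

theorem grad1 {P A : E} (h : A ≠ P) (p : ℝ) :
    HasFDerivAt (fun B : E => ‖P - B‖ ^ p)
      ((-(p * ‖P - A‖ ^ (p - 2))) • innerSL ℝ (P - A)) A := by
  have h0 : P - A ≠ 0 := sub_ne_zero_of_ne (Ne.symm h)
  have hsub : HasFDerivAt (fun B : E => P - B)
      ((0 : E →L[ℝ] E) - ContinuousLinearMap.id ℝ E) A :=
    (hasFDerivAt_const P A).sub (hasFDerivAt_id A)
  have := (myHasFDerivAt_norm_rpow h0 p).comp A hsub
  refine this.congr_fderiv ?_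
  ext v
  simp only [ContinuousLinearMap.smul_apply, ContinuousLinearMap.comp_apply,
    ContinuousLinearMap.coe_sub', Pi.sub_apply, ContinuousLinearMap.zero_apply,
    ContinuousLinearMap.id_apply, innerSL_apply_apply, zero_sub, inner_neg_right,
    ContinuousLinearMap.neg_apply, smul_eq_mul]
  ring

theorem grad1_fderiv_apply {P A : E} (h : A ≠ P) (p : ℝ) (v : E) :
    fderiv ℝ (fun B : E => ‖P - B‖ ^ p) A v = -(p * ‖P - A‖ ^ (p - 2)) * ⟪P - A, v⟫ := by
  rw [(grad1 h p).fderiv]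
  simp only [ContinuousLinearMap.smul_apply, innerSL_apply_apply, smul_eq_mul]

theorem grad2 {P A : E} (h : A ≠ P) (p : ℝ) (u v : E) :
    fderiv ℝ (fderiv ℝ (fun B : E => ‖P - B‖ ^ p)) A u v =
      p * (p - 2) * ‖P - A‖ ^ (p - 4) * ⟪P - A, u⟫ * ⟪P - A, v⟫
        + p * ‖P - A‖ ^ (p - 2) * ⟪u, v⟫ := by
  have hev : fderiv ℝ (fun B : E => ‖P - B‖ ^ p) =ᶠ[nhds A]
      fun y => (-(p * ‖P - y‖ ^ (p - 2))) • innerSL ℝ (P - y) := by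
    filter_upwards [compl_singleton_mem_nhds h] with y hy
    exact (grad1 hy p).fderiv
  rw [hev.fderiv_eq]
  have hs : HasFDerivAt (fun y : E => -(p * ‖P - y‖ ^ (p - 2)))
      (-(p • ((-((p-2) * ‖P - A‖ ^ ((p-2) - 2))) • innerSL ℝ (P - A)))) A :=
    ((grad1 h (p-2)).const_mul p).neg
  have hw : HasFDerivAt (fun y : E => innerSL ℝ (P - y))
      ((innerSL ℝ).comp ((0 : E →L[ℝ] E) - ContinuousLinearMap.id ℝ E)) A :=
    (innerSL ℝ).hasFDerivAt.comp A ((hasFDerivAt_const P A).sub (hasFDerivAt_id A))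
  have hF : HasFDerivAt (fun y : E => -(p * ‖P - y‖ ^ (p - 2)) • innerSL ℝ (P - y)) _ A :=
    hs.smul hw
  rw [hF.fderiv]
  rw [show p - 2 - 2 = p - 4 by ring] 
  simp only [ContinuousLinearMap.add_apply, ContinuousLinearMap.smul_apply,
    ContinuousLinearMap.comp_apply, ContinuousLinearMap.coe_sub', Pi.sub_apply,
    ContinuousLinearMap.zero_apply, ContinuousLinearMap.id_apply, innerSL_apply_apply,
    ContinuousLinearMap.smulRight_apply, ContinuousLinearMap.neg_apply,
    zero_sub, inner_neg_right, inner_neg_left, smul_eq_mul, neg_smul, neg_neg, Pi.smul_apply,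
    Pi.neg_apply, smul_smul]
  ring

lemma diag_same_sign {d : ℕ} (c : Fin d → Fin d → ℝ)
    (hell : ∀ ξ : Fin d → ℝ, ξ ≠ 0 → (∑ i, ∑ j, c i j * ξ i * ξ j) ≠ 0)
    (i0 i : Fin d) : 0 < c i0 i0 * c i i := by
  have hQs : ∀ m : Fin d,
      (∑ l, ∑ j, c l j * (Pi.single m 1 : Fin d → ℝ) l * (Pi.single m 1 : Fin d → ℝ) j) = c m m := by
    intro m
    simp [Pi.single_apply, mul_ite, ite_mul, Finset.sum_ite_eq, Finset.sum_ite_eq']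
  have hsingle : ∀ m : Fin d, (Pi.single m 1 : Fin d → ℝ) ≠ 0 := by
    intro m h
    have := congrFun h m
    simp at this
  have hne : ∀ m : Fin d, c m m ≠ 0 := by
    intro m
    have := hell _ (hsingle m)
    rwa [hQs m] at this
  by_cases hii : i = i0
  · subst hii
    exact mul_self_pos.mpr (hne i)
  · set ξ : ℝ → Fin d → ℝ :=
      fun s l => (1-s) * (Pi.single i0 1 : Fin d → ℝ) l + s * (Pi.single i 1 : Fin d → ℝ) l with hξ
    have hξne : ∀ s : ℝ, ξ s ≠ 0 := by
      intro s h
      have h0 := congrFun h i0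
      have h1 := congrFun h i
      simp [hξ, Pi.single_apply, hii, Ne.symm hii] at h0 h1
      rw [h1] at h0
      simp at h0
    set F : ℝ → ℝ := fun s => ∑ l, ∑ j, c l j * ξ s l * ξ s j with hFdef
    have hFcont : Continuous F := by
      apply continuous_finset_sum
      intro l _
      apply continuous_finset_sum
      intro j _
      fun_prop
    have hF0 : F 0 = c i0 i0 := by
      have hx : ξ 0 = (Pi.single i0 1 : Fin d → ℝ) := funext fun l => by simp [hξ]
      rw [hFdef]
      simp only [hx]
      exact hQs i0
    have hF1 : F 1 = c i i := by
      have hx : ξ 1 = (Pi.single i 1 : Fin d → ℝ) := funext fun l => by simp [hξ]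
      rw [hFdef]
      simp only [hx]
      exact hQs i
    have hFne : ∀ s : ℝ, F s ≠ 0 := fun s => hell _ (hξne s)
    by_contra hle
    push_neg at hle
    have h0mem : (0:ℝ) ∈ Set.uIcc (F 0) (F 1) := by
      rw [Set.mem_uIcc, hF0, hF1]
      rcases lt_or_gt_of_ne (hne i0) with h | h <;>
        rcases lt_or_gt_of_ne (hne i) with h' | h'
      · exact absurd (mul_pos_of_neg_of_neg h h') (not_lt.mpr hle)
      · exact Or.inl ⟨h.le, h'.le⟩
      · exact Or.inr ⟨h'.le, h.le⟩
      · exact absurd (mul_pos h h') (not_lt.mpr hle)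
    obtain ⟨s, _, hFs⟩ := intermediate_value_uIcc hFcont.continuousOn h0mem
    exact hFne s hFs

open Classical in
/-- Let `d ≥ 2`, let constants `c_{ij}` satisfy the ellipticity condition,
`b ∈ ℝ^d`, `ρ ∈ ℝ`, `P ∈ ℝ^d`, and `k` odd with `k > 2`. The function
`g(A) = Σ c_{ij} ∂²_{a_i a_j}‖P−A‖^k + Σ b_j ∂_{a_j}‖P−A‖^k + ρ‖P−A‖^k` for `A ≠ P`
(derivatives in the center variable `A`, second partials realized as the second iterated
Fréchet derivative on standard basis vectors), with `g(P) = 0`, is not analytic at `P`. -/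
theorem elliptic_op_radial_power_not_analyticAt (d k : ℕ) (hd : 2 ≤ d)
    (hk : Odd k) (hk2 : 2 < k)
    (c : Fin d → Fin d → ℝ) (b : Fin d → ℝ) (ρ : ℝ)
    (hell : ∀ ξ : Fin d → ℝ, ξ ≠ 0 → (∑ i, ∑ j, c i j * ξ i * ξ j) ≠ 0)
    (P : EuclideanSpace ℝ (Fin d)) :
    ¬ AnalyticAt ℝ
      (fun A : EuclideanSpace ℝ (Fin d) =>
        if A = P then (0 : ℝ)
        else
          (∑ i, ∑ j, c i j *
              iteratedFDeriv ℝ 2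
                (fun B : EuclideanSpace ℝ (Fin d) => ‖P - B‖ ^ k) A
                ![EuclideanSpace.single i 1, EuclideanSpace.single j 1]) +
            (∑ j, b j *
              fderiv ℝ (fun B : EuclideanSpace ℝ (Fin d) => ‖P - B‖ ^ k) A
                (EuclideanSpace.single j 1)) +
            ρ * ‖P - A‖ ^ k) P := by
  intro hA
  set G : EuclideanSpace ℝ (Fin d) → ℝ := fun A =>
      if A = P then (0 : ℝ)
      else
        (∑ i, ∑ j, c i j *
            iteratedFDeriv ℝ 2
              (fun B : EuclideanSpace ℝ (Fin d) => ‖P - B‖ ^ k) A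
              ![EuclideanSpace.single i 1, EuclideanSpace.single j 1]) +
          (∑ j, b j *
            fderiv ℝ (fun B : EuclideanSpace ℝ (Fin d) => ‖P - B‖ ^ k) A
              (EuclideanSpace.single j 1)) +
          ρ * ‖P - A‖ ^ k with hG
  have h2k : (2:ℝ) < (k:ℝ) := by exact_mod_cast hk2
  set p : ℝ := (k:ℝ) with hp
  have hp0 : (0:ℝ) < p := by linarith
  have hp2 : (0:ℝ) < p - 2 := by linarith
  set i0 : Fin d := ⟨0, by omega⟩ with hi0
  -- sign facts
  have hsame : ∀ i : Fin d, 0 < c i0 i0 * c i i := diag_same_sign c hell i0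
  have hne00 : c i0 i0 ≠ 0 := by
    intro h
    have := hsame i0
    rw [h] at this
    simp at this
  set α : ℝ := p * (p - 2) * c i0 i0 + p * (∑ i, c i i) with hα
  have hαne : α ≠ 0 := by
    rcases lt_or_gt_of_ne hne00 with h | h
    · have hneg : ∀ i : Fin d, c i i < 0 := by
        intro i
        rcases (mul_pos_iff.mp (hsame i)) with ⟨h1, _⟩ | ⟨_, h2⟩
        · exact absurd h1 (not_lt.mpr h.le)
        · exact h2
      have hsumneg : (∑ i, c i i) < 0 :=
        Finset.sum_neg (fun i _ => hneg i) ⟨i0, Finset.mem_univ i0⟩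
      have : α < 0 := by
        have h1 : p * (p - 2) * c i0 i0 < 0 :=
          mul_neg_of_pos_of_neg (mul_pos hp0 hp2) h
        have h2 : p * (∑ i, c i i) < 0 := mul_neg_of_pos_of_neg hp0 hsumneg
        linarith
      exact this.ne
    · have hpos : ∀ i : Fin d, 0 < c i i := by
        intro i
        rcases (mul_pos_iff.mp (hsame i)) with ⟨_, h1⟩ | ⟨h2, _⟩
        · exact h1
        · exact absurd h (not_lt.mpr h2.le)
      have hsumpos : 0 < (∑ i, c i i) :=
        Finset.sum_pos (fun i _ => hpos i) ⟨i0, Finset.mem_univ i0⟩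
      have : 0 < α := by
        have h1 : 0 < p * (p - 2) * c i0 i0 := mul_pos (mul_pos hp0 hp2) h
        have h2 : 0 < p * (∑ i, c i i) := mul_pos hp0 hsumpos
        linarith
      exact this.ne'
  -- the line
  set e1 : EuclideanSpace ℝ (Fin d) := EuclideanSpace.single i0 1 with he1
  have he1ne : e1 ≠ 0 := by
    intro h
    have := congrArg norm h
    rw [he1, EuclideanSpace.norm_single] at this
    simp at this
  set L : ℝ → EuclideanSpace ℝ (Fin d) := fun t => P + t • e1 with hL
  have hL0 : L 0 = P := by simp [hL]
  have hLanal : AnalyticAt ℝ L 0 := by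
    have h1 : AnalyticAt ℝ (fun t : ℝ => t • e1) 0 := by
      have := ((ContinuousLinearMap.id ℝ ℝ).smulRight e1).analyticAt (0:ℝ)
      convert this using 1
      funext t
      simp
    exact analyticAt_const.add h1
  have hcomp : AnalyticAt ℝ (G ∘ L) 0 := by
    refine AnalyticAt.comp ?_ hLanal
    rw [hL0]
    exact hA
  -- value along the line
  have hrpow : (fun B : EuclideanSpace ℝ (Fin d) => ‖P - B‖ ^ k)
      = fun B => ‖P - B‖ ^ p := funext fun B => (Real.rpow_natCast _ k).symm
  have hGval : ∀ t : ℝ, t ≠ 0 →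
      (G ∘ L) t = α * |t| ^ (p - 2) + (p * b i0) * (t * |t| ^ (p - 2)) + ρ * |t| ^ p := by
    intro t ht
    have hAne : L t ≠ P := by
      rw [hL]
      simp only [ne_eq, add_eq_left]
      exact smul_ne_zero ht he1ne
    have hPA : P - L t = (-t) • e1 := by
      rw [hL, neg_smul]
      beta_reduce
      abel
    have habs : (0:ℝ) < |t| := abs_pos.mpr ht
    have hnorm : ‖P - L t‖ = |t| := by
      rw [hPA, norm_smul, he1, EuclideanSpace.norm_single]
      simp
    have hinner : ∀ j : Fin d, ⟪P - L t, EuclideanSpace.single j (1:ℝ)⟫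
        = if j = i0 then -t else 0 := by
      intro j
      rw [hPA, real_inner_smul_left, he1, EuclideanSpace.inner_single_left]
      simp only [EuclideanSpace.single_apply, map_one, one_mul, mul_ite, mul_zero]
      simp [eq_comm]
    have hinner2 : ∀ i j : Fin d,
        ⟪(EuclideanSpace.single i (1:ℝ) : EuclideanSpace ℝ (Fin d)),
          EuclideanSpace.single j (1:ℝ)⟫ = if j = i then (1:ℝ) else 0 := by
      intro i j
      rw [EuclideanSpace.inner_single_left]
      simp only [EuclideanSpace.single_apply, map_one, one_mul]
      simp [eq_comm]
    have h2nd : ∀ i j : Fin d,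
        iteratedFDeriv ℝ 2 (fun B : EuclideanSpace ℝ (Fin d) => ‖P - B‖ ^ k) (L t)
          ![EuclideanSpace.single i 1, EuclideanSpace.single j 1]
        = p * (p - 2) * |t| ^ (p - 4) * (if i = i0 then -t else 0) * (if j = i0 then -t else 0)
            + p * |t| ^ (p - 2) * (if j = i then (1:ℝ) else 0) := by
      intro i j
      rw [hrpow, iteratedFDeriv_two_apply]
      simp only [Matrix.cons_val_zero, Matrix.cons_val_one, Matrix.head_cons]
      rw [grad2 hAne, hnorm, hinner i, hinner j, hinner2 i j]
    have h1st : ∀ j : Fin d,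
        fderiv ℝ (fun B : EuclideanSpace ℝ (Fin d) => ‖P - B‖ ^ k) (L t)
          (EuclideanSpace.single j 1)
        = -(p * |t| ^ (p - 2)) * (if j = i0 then -t else 0) := by
      intro j
      rw [hrpow, grad1_fderiv_apply hAne, hnorm, hinner j]
    have hcsum : (∑ i, ∑ j, c i j *
        (p * (p - 2) * |t| ^ (p - 4) * (if i = i0 then -t else 0) * (if j = i0 then -t else 0)
          + p * |t| ^ (p - 2) * (if j = i then (1:ℝ) else 0)))
        = p * (p - 2) * |t| ^ (p - 4) * (t * t) * c i0 i0
          + p * |t| ^ (p - 2) * (∑ i, c i i) := by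
      have hY : ∀ i : Fin d,
          (∑ j, c i j * (p * |t| ^ (p - 2) * if j = i then (1:ℝ) else 0))
            = p * |t| ^ (p - 2) * c i i := by
        intro i
        simp [mul_ite, Finset.sum_ite_eq']
        ring
      have hX : (∑ i, ∑ j, c i j *
          ((p * (p - 2) * |t| ^ (p - 4) * if i = i0 then -t else 0)
            * if j = i0 then -t else 0))
          = p * (p - 2) * |t| ^ (p - 4) * (t * t) * c i0 i0 := by
        simp [mul_ite, ite_mul, zero_mul, mul_zero, Finset.sum_ite_eq']
        ring
      calc (∑ i, ∑ j, c i j *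
          ((p * (p - 2) * |t| ^ (p - 4) * if i = i0 then -t else 0)
              * (if j = i0 then -t else 0)
            + p * |t| ^ (p - 2) * (if j = i then (1:ℝ) else 0)))
          = (∑ i, ∑ j, c i j *
              ((p * (p - 2) * |t| ^ (p - 4) * if i = i0 then -t else 0)
                * if j = i0 then -t else 0))
            + (∑ i, ∑ j, c i j * (p * |t| ^ (p - 2) * if j = i then (1:ℝ) else 0)) := by
            simp only [mul_add, Finset.sum_add_distrib]
        _ = p * (p - 2) * |t| ^ (p - 4) * (t * t) * c i0 i0
            + p * |t| ^ (p - 2) * (∑ i, c i i) := by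
            rw [hX, Finset.sum_congr rfl (fun i _ => hY i), Finset.mul_sum]
    have hbsum : (∑ j, b j * (-(p * |t| ^ (p - 2)) * (if j = i0 then -t else 0)))
        = p * b i0 * (t * |t| ^ (p - 2)) := by
      simp [mul_ite, Finset.sum_ite_eq, Finset.mem_univ]
      ring
    have htt : p * (p - 2) * |t| ^ (p - 4) * (t * t) * c i0 i0
        = p * (p - 2) * c i0 i0 * |t| ^ (p - 2) := by
      have h1 : t * t = |t| ^ (2:ℝ) := by
        rw [Real.rpow_two]
        rw [sq_abs, sq]
      rw [h1, show p - 2 = p - 4 + 2 by ring, Real.rpow_add habs]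
      ring
    have hk' : ‖P - L t‖ ^ k = |t| ^ p := by
      rw [hnorm, Real.rpow_natCast]
    calc (G ∘ L) t = (∑ i, ∑ j, c i j *
          iteratedFDeriv ℝ 2 (fun B : EuclideanSpace ℝ (Fin d) => ‖P - B‖ ^ k) (L t)
            ![EuclideanSpace.single i 1, EuclideanSpace.single j 1]) +
          (∑ j, b j *
            fderiv ℝ (fun B : EuclideanSpace ℝ (Fin d) => ‖P - B‖ ^ k) (L t)
              (EuclideanSpace.single j 1)) + ρ * ‖P - L t‖ ^ k := by
          rw [hG]
          simp only [Function.comp_apply]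
          rw [if_neg hAne]
      _ = α * |t| ^ (p - 2) + (p * b i0) * (t * |t| ^ (p - 2)) + ρ * |t| ^ p := by
          simp only [h2nd, h1st]
          rw [hcsum, hbsum, htt, hk', hα]
          ring
  -- endgame
  have hk3 : 3 ≤ k := by rcases hk with ⟨m, hm⟩; omega
  have hodd2 : Odd (k - 2) := by
    rcases hk with ⟨m, hm⟩
    exact ⟨m - 1, by omega⟩
  set Q : ℝ → ℝ := fun t => α * t ^ (k - 2) + (p * b i0) * t ^ (k - 1) + ρ * t ^ k
    with hQdef
  have hQanal : AnalyticAt ℝ Q 0 := by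
    rw [hQdef]
    exact ((analyticAt_const.mul (analyticAt_id.pow _)).add
      (analyticAt_const.mul (analyticAt_id.pow _))).add
      (analyticAt_const.mul (analyticAt_id.pow _))
  have hcast2 : ((k - 2 : ℕ) : ℝ) = p - 2 := by
    rw [Nat.cast_sub (by omega : 2 ≤ k)]
    norm_num
    exact hp.symm
  have hposval : ∀ t : ℝ, 0 < t → (G ∘ L) t = Q t := by
    intro t ht
    rw [hGval t ht.ne', abs_of_pos ht]
    simp only [hQdef]
    have e2 : t ^ (p - 2) = t ^ (k - 2 : ℕ) := by
      rw [← Real.rpow_natCast t (k - 2), hcast2]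
    have ek : t ^ p = t ^ (k : ℕ) := by
      rw [← Real.rpow_natCast t k]
    rw [e2, ek, show k - 1 = (k - 2) + 1 by omega, pow_succ]
    ring
  have hnegval : ∀ t : ℝ, t < 0 → (G ∘ L) t = - Q t := by
    intro t ht
    rw [hGval t ht.ne, abs_of_neg ht]
    simp only [hQdef]
    have e2 : (-t) ^ (p - 2) = (-t) ^ (k - 2 : ℕ) := by
      rw [← Real.rpow_natCast (-t) (k - 2), hcast2]
    have ek : (-t) ^ p = (-t) ^ (k : ℕ) := by
      rw [← Real.rpow_natCast (-t) k]
    rw [e2, ek, hodd2.neg_pow, hk.neg_pow,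
      show k - 1 = (k - 2) + 1 by omega, pow_succ]
    ring
  have hsub1 : AnalyticAt ℝ (G ∘ L - Q) 0 := hcomp.sub hQanal
  have hsub2 : AnalyticAt ℝ (G ∘ L + Q) 0 := hcomp.add hQanal
  have hev1 : ∀ᶠ t in nhds (0:ℝ), (G ∘ L) t = Q t := by
    have hfreq : ∃ᶠ t in nhdsWithin (0:ℝ) {(0:ℝ)}ᶜ, (G ∘ L - Q) t = 0 := by
      have hev : ∀ᶠ t in nhdsWithin (0:ℝ) (Set.Ioi 0), (G ∘ L - Q) t = 0 := by
        filter_upwards [self_mem_nhdsWithin] with t ht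
        simp only [Pi.sub_apply, sub_eq_zero]
        exact hposval t ht
      exact hev.frequently.filter_mono
        (nhdsWithin_mono 0 fun x hx => ne_of_gt hx)
    have := hsub1.frequently_zero_iff_eventually_zero.mp hfreq
    filter_upwards [this] with t ht
    simpa [sub_eq_zero] using ht
  have hev2 : ∀ᶠ t in nhds (0:ℝ), (G ∘ L) t = - Q t := by
    have hfreq : ∃ᶠ t in nhdsWithin (0:ℝ) {(0:ℝ)}ᶜ, (G ∘ L + Q) t = 0 := by
      have hev : ∀ᶠ t in nhdsWithin (0:ℝ) (Set.Iio 0), (G ∘ L + Q) t = 0 := by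
        filter_upwards [self_mem_nhdsWithin] with t ht
        simp only [Pi.add_apply]
        rw [hnegval t ht]
        ring
      exact hev.frequently.filter_mono
        (nhdsWithin_mono 0 fun x hx => ne_of_lt hx)
    have := hsub2.frequently_zero_iff_eventually_zero.mp hfreq
    filter_upwards [this] with t ht
    have := ht
    simp only [Pi.add_apply] at this
    linarith
  have hev3 : ∀ᶠ t in nhds (0:ℝ), Q t = 0 := by
    filter_upwards [hev1, hev2] with t h1 h2
    have : Q t = - Q t := by
      conv_lhs => rw [← h1]
      exact h2
    linarith
  have hrcont : Continuous fun t : ℝ => α + p * b i0 * t + ρ * t ^ 2 := by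
    fun_prop
  have hrne : ∀ᶠ t in nhds (0:ℝ), α + p * b i0 * t + ρ * t ^ 2 ≠ 0 := by
    have h0 : α + p * b i0 * 0 + ρ * 0 ^ 2 ≠ 0 := by simpa using hαne
    exact hrcont.continuousAt.eventually_ne h0
  have hex : ∃ t : ℝ, t ≠ 0 ∧ Q t = 0 ∧ α + p * b i0 * t + ρ * t ^ 2 ≠ 0 := by
    have hall : ∀ᶠ t in nhdsWithin (0:ℝ) {(0:ℝ)}ᶜ,
        Q t = 0 ∧ α + p * b i0 * t + ρ * t ^ 2 ≠ 0 :=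
      ((hev3.and hrne).filter_mono nhdsWithin_le_nhds)
    have hmem : ∀ᶠ t in nhdsWithin (0:ℝ) {(0:ℝ)}ᶜ, t ≠ (0:ℝ) :=
      eventually_mem_nhdsWithin
    obtain ⟨t, h1, h2⟩ := (hmem.and hall).exists
    exact ⟨t, h1, h2.1, h2.2⟩
  obtain ⟨t, ht, hQt, hrt⟩ := hex
  have e1 : t ^ (k - 1) = t ^ (k - 2) * t := by
    rw [← pow_succ]
    congr 1
    omega
  have e2 : t ^ k = t ^ (k - 2) * t ^ 2 := by
    rw [← pow_add]
    congr 1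
    omega
  have hfac : Q t = t ^ (k - 2) * (α + p * b i0 * t + ρ * t ^ 2) := by
    simp only [hQdef]
    rw [e1, e2]
    ring
  rw [hfac] at hQt
  rcases mul_eq_zero.mp hQt with h | h
  · exact ht (pow_eq_zero_iff (by omega : k - 2 ≠ 0) |>.mp h)
  · exact hrt h
end

section
/- Let d ≥ 2, let c_{ij} ∈ ℝ (1 ≤ i,j ≤ d) satisfy the ellipticity condition Σ_{i,j} c_{ij} ξ_i ξ_j ≠ 0 for every ξ ∈ ℝ^d \ {0}, let b ∈ ℝ^d, ρ ∈ ℝ, P ∈ ℝ^d, and let k ∈ ℕ be even with k ≥ 4. Define g : ℝ^d → ℝ by g(A) = Σ_{i,j} c_{ij} ∂²_{a_i a_j}[‖P−A‖^k log‖P−A‖] + Σ_j b_j ∂_{a_j}[‖P−A‖^k log‖P−A‖] + ρ ‖P−A‖^k log‖P−A‖ for A ≠ P (derivatives in the A variable), and g(P) = 0. Then g is not analytic at A = P. -/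
open Real Filter Topology

lemma aux_pow_log_tendsto_s16 (j : ℕ) (hj : 1 ≤ j) :
    Tendsto (fun t : ℝ => t ^ j * Real.log t) (𝓝[>] (0:ℝ)) (𝓝 0) := by
  have h1 : Tendsto (fun t : ℝ => Real.log t * t) (𝓝[>] (0:ℝ)) (𝓝 0) := by
    have := tendsto_log_mul_rpow_nhdsGT_zero (r := 1) one_pos
    refine this.congr' ?_
    filter_upwards [self_mem_nhdsWithin] with t ht
    rw [Real.rpow_one]
  have h2 : Tendsto (fun t : ℝ => t ^ (j - 1)) (𝓝[>] (0:ℝ)) (𝓝 ((0:ℝ) ^ (j - 1))) :=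
    ((continuous_pow (j-1)).tendsto 0).mono_left nhdsWithin_le_nhds
  have h3 := h1.mul h2
  rw [zero_mul] at h3
  refine h3.congr ?_
  intro t
  conv_rhs => rw [show j = (j - 1) + 1 from (Nat.succ_pred_eq_of_pos hj).symm]
  ring

lemma aux_inv_log_tendsto :
    Tendsto (fun t : ℝ => (Real.log t)⁻¹) (𝓝[>] (0:ℝ)) (𝓝 0) := by
  have h : Tendsto (fun t : ℝ => -Real.log t) (𝓝[>] (0:ℝ)) atTop :=
    tendsto_neg_atBot_atTop.comp Real.tendsto_log_nhdsGT_zero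
  have := h.inv_tendsto_atTop
  have h2 : Tendsto (fun t : ℝ => -(-Real.log t)⁻¹) (𝓝[>] (0:ℝ)) (𝓝 (-0)) := this.neg
  rw [neg_zero] at h2
  refine h2.congr fun t => ?_
  rw [inv_neg, neg_neg]

/-- If `ψ` is analytic at `0` and agrees with `(a tⁿ + b tⁿ⁺¹ + c tⁿ⁺²) log |t|` on a
punctured neighborhood of `0`, then `a = 0`. -/
lemma log_coeff_zero {ψ : ℝ → ℝ} {n : ℕ} (hn : 1 ≤ n) {a b c : ℝ}
    (hψ : AnalyticAt ℝ ψ 0)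
    (heq : ∀ᶠ t in 𝓝[≠] (0:ℝ), ψ t =
      (a * t ^ n + b * t ^ (n+1) + c * t ^ (n+2)) * Real.log |t|) :
    a = 0 := by
  have hsub : 𝓝[>] (0:ℝ) ≤ 𝓝[≠] (0:ℝ) :=
    nhdsWithin_mono 0 fun x hx => ne_of_gt hx
  have heq' : ∀ᶠ t in 𝓝[>] (0:ℝ), ψ t =
      (a * t ^ n + b * t ^ (n+1) + c * t ^ (n+2)) * Real.log t := by
    filter_upwards [heq.filter_mono hsub, self_mem_nhdsWithin] with t ht ht0
    rw [ht, abs_of_pos ht0]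
  have hIoo : Set.Ioo (0:ℝ) 1 ∈ 𝓝[>] (0:ℝ) :=
    Ioo_mem_nhdsGT_of_mem ⟨le_refl 0, one_pos⟩
  -- key : ψ t / (t^n * log t) → 0
  have key : Tendsto (fun t : ℝ => ψ t / (t ^ n * Real.log t)) (𝓝[>] (0:ℝ)) (𝓝 0) := by
    rcases eq_or_ne (analyticOrderAt ψ 0) ⊤ with ho | ho
    · have h0 : ∀ᶠ z in 𝓝 (0:ℝ), ψ z = 0 := analyticOrderAt_eq_top.mp ho
      refine Tendsto.congr' ?_ tendsto_const_nhds
      filter_upwards [h0.filter_mono nhdsWithin_le_nhds] with t ht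
      show (0:ℝ) = ψ t / (t ^ n * Real.log t)
      rw [ht, zero_div]
    · lift analyticOrderAt ψ 0 to ℕ using ho with n₀ hn₀
      obtain ⟨u, hu, hu0, huev⟩ := (hψ.analyticOrderAt_eq_natCast).mp hn₀.symm
      have huev' : ∀ᶠ t in 𝓝[>] (0:ℝ), ψ t = t ^ n₀ * u t := by
        filter_upwards [huev.filter_mono nhdsWithin_le_nhds] with t ht
        simpa using ht
      have hucont : Tendsto u (𝓝[>] (0:ℝ)) (𝓝 (u 0)) :=
        (hu.continuousAt.tendsto).mono_left nhdsWithin_le_nhds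
      -- first : n ≤ n₀
      have hle : n ≤ n₀ := by
        by_contra hlt
        push_neg at hlt
        have hA : Tendsto (fun t : ℝ => ψ t / t ^ n₀) (𝓝[>] (0:ℝ)) (𝓝 (u 0)) := by
          refine hucont.congr' ?_
          filter_upwards [huev', self_mem_nhdsWithin] with t ht ht0
          rw [ht, mul_comm, mul_div_assoc, div_self (pow_ne_zero _ (ne_of_gt ht0)), mul_one]
        have hB : Tendsto (fun t : ℝ => ψ t / t ^ n₀) (𝓝[>] (0:ℝ)) (𝓝 0) := by
          have hpl := aux_pow_log_tendsto_s16 (n - n₀) (by omega)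
          have hpoly : Tendsto (fun t : ℝ => a + b * t + c * t ^ 2) (𝓝[>] (0:ℝ))
              (𝓝 (a + b * 0 + c * 0 ^ 2)) :=
            ((by continuity : Continuous fun t : ℝ => a + b * t + c * t ^ 2).tendsto
              0).mono_left nhdsWithin_le_nhds
          have hmul := hpoly.mul hpl
          simp only [mul_zero] at hmul
          refine hmul.congr' ?_
          filter_upwards [heq', self_mem_nhdsWithin] with t ht ht0
          rw [ht]
          have htn : t ^ n₀ ≠ 0 := pow_ne_zero _ (ne_of_gt ht0)
          have hpow : t ^ n = t ^ n₀ * t ^ (n - n₀) := by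
            rw [← pow_add]; congr 1; omega
          field_simp
          ring_nf
          rw [hpow]
          ring
        have := tendsto_nhds_unique hA hB
        exact hu0 this
      -- now n ≤ n₀ : ψ t / (t^n log t) = t^(n₀-n) * u t * (log t)⁻¹ → 0
      have hlim : Tendsto (fun t : ℝ => t ^ (n₀ - n) * u t * (Real.log t)⁻¹)
          (𝓝[>] (0:ℝ)) (𝓝 ((0:ℝ) ^ (n₀ - n) * u 0 * 0)) := by
        exact ((((continuous_pow (n₀ - n)).tendsto 0).mono_left
          nhdsWithin_le_nhds).mul hucont).mul aux_inv_log_tendsto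
      rw [mul_zero] at hlim
      refine hlim.congr' ?_
      filter_upwards [huev', hIoo] with t ht ht0
      have htne : t ≠ 0 := ne_of_gt ht0.1
      have hlog : Real.log t ≠ 0 := ne_of_lt (Real.log_neg ht0.1 ht0.2)
      rw [ht]
      have hpow : t ^ n₀ = t ^ n * t ^ (n₀ - n) := by
        rw [← pow_add]; congr 1; omega
      rw [hpow]
      field_simp
  -- also ψ t / (t^n log t) = a + b t + c t² eventually
  have heq2 : ∀ᶠ t in 𝓝[>] (0:ℝ), a + b * t + c * t ^ 2 = ψ t / (t ^ n * Real.log t) := by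
    filter_upwards [heq', hIoo] with t ht ht0
    have htne : t ≠ 0 := ne_of_gt ht0.1
    have hlog : Real.log t ≠ 0 := ne_of_lt (Real.log_neg ht0.1 ht0.2)
    rw [ht]
    field_simp
    ring
  have hA : Tendsto (fun t : ℝ => ψ t / (t ^ n * Real.log t)) (𝓝[>] (0:ℝ))
      (𝓝 (a + b * 0 + c * 0 ^ 2)) := by
    refine Tendsto.congr' heq2 ?_
    exact ((by continuity : Continuous (fun t : ℝ => a + b * t + c * t ^ 2)).tendsto 0).mono_left
      nhdsWithin_le_nhds
  have := tendsto_nhds_unique hA key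
  simpa using this

open Real Filter Topology RealInnerProductSpace

noncomputable def qq (m : ℕ) : ℝ → ℝ := fun s => s ^ m * Real.log s / 2
noncomputable def qq1 (m : ℕ) : ℝ → ℝ := fun s => ((m:ℝ) * Real.log s + 1) * s ^ (m-1) / 2
noncomputable def qq2 (m : ℕ) : ℝ → ℝ :=
  fun s => ((m:ℝ) * ((m:ℝ) - 1) * Real.log s + (2*(m:ℝ) - 1)) * s ^ (m-2) / 2

lemma hasDerivAt_qq (m : ℕ) (hm : 2 ≤ m) {s : ℝ} (hs : 0 < s) :
    HasDerivAt (qq m) (qq1 m s) s := by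
  have h := ((hasDerivAt_pow m s).mul (Real.hasDerivAt_log hs.ne')).div_const 2
  refine h.congr_deriv ?_
  have hsm : s ^ m * s⁻¹ = s ^ (m-1) := by
    rw [show m = (m-1)+1 by omega, pow_succ]
    field_simp
    rw [Nat.add_sub_cancel]
  unfold qq1
  rw [← hsm]
  field_simp

lemma hasDerivAt_qq1 (m : ℕ) (hm : 2 ≤ m) {s : ℝ} (hs : 0 < s) :
    HasDerivAt (qq1 m) (qq2 m s) s := by
  have h := ((((Real.hasDerivAt_log hs.ne').const_mul (m:ℝ)).add_const 1).mul
    (hasDerivAt_pow (m-1) s)).div_const 2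
  refine h.congr_deriv ?_
  unfold qq2
  have h1 : s ^ (m-1) = s ^ (m-2) * s := by rw [show m-1 = (m-2)+1 by omega, pow_succ]
  have h2 : (m-1-1 : ℕ) = m-2 := by omega
  have h3 : ((m-1 : ℕ) : ℝ) = (m:ℝ) - 1 := by
    rw [Nat.cast_sub (by omega)]; norm_num
  rw [h2, h3, h1]
  field_simp
  ring

variable {E : Type*} [NormedAddCommGroup E] [InnerProductSpace ℝ E]

lemma hasFDerivAt_sigma (P A : E) :
    HasFDerivAt (fun B : E => ⟪P - B, P - B⟫) ((-2 : ℝ) • (innerSL ℝ (P - A))) A := by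
  have h1 : HasFDerivAt (fun B : E => P - B) (-(ContinuousLinearMap.id ℝ E)) A := by
    simpa using (hasFDerivAt_const (𝕜 := ℝ) P A).fun_sub (hasFDerivAt_id (𝕜 := ℝ) A)
  have h2 := h1.inner ℝ h1
  have heq : ((fderivInnerCLM ℝ (P - A, P - A)).comp
      ((-ContinuousLinearMap.id ℝ E).prod (-ContinuousLinearMap.id ℝ E)))
      = (-2 : ℝ) • innerSL ℝ (P - A) := by
    ext v
    simp only [ContinuousLinearMap.coe_comp', Function.comp_apply,
      ContinuousLinearMap.prod_apply, ContinuousLinearMap.neg_apply,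
      ContinuousLinearMap.coe_id', id_eq, fderivInnerCLM_apply,
      ContinuousLinearMap.smul_apply, innerSL_apply_apply, smul_eq_mul,
      inner_neg_neg, inner_neg_left, inner_neg_right]
    rw [real_inner_comm v (P - A)]
    ring
  rw [← heq]
  exact h2

lemma tps_eq_qq_comp (m : ℕ) (P : E) :
    (fun B : E => ‖P - B‖ ^ (2*m) * Real.log ‖P - B‖) =
      (fun B : E => qq m ⟪P - B, P - B⟫) := by
  funext B
  unfold qq
  rw [real_inner_self_eq_norm_sq, ← pow_mul, Real.log_pow]
  push_cast
  ring

lemma tps_hasFDerivAt (m : ℕ) (hm : 2 ≤ m) (P A : E) (hA : A ≠ P) :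
    HasFDerivAt (fun B : E => ‖P - B‖ ^ (2*m) * Real.log ‖P - B‖)
      ((-2 * qq1 m ⟪P - A, P - A⟫) • innerSL ℝ (P - A)) A := by
  rw [tps_eq_qq_comp m P]
  have hpos : (0:ℝ) < ⟪P - A, P - A⟫ := by
    rw [real_inner_self_eq_norm_sq]
    have h0 : P - A ≠ 0 := sub_ne_zero.mpr (Ne.symm hA)
    exact pow_pos (norm_pos_iff.mpr h0) 2
  have h := (hasDerivAt_qq m hm hpos).comp_hasFDerivAt A (hasFDerivAt_sigma P A)
  rw [smul_smul, mul_comm] at h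
  exact h

lemma tps_second (m : ℕ) (hm : 2 ≤ m) (P A : E) (hA : A ≠ P) (v w : E) :
    iteratedFDeriv ℝ 2 (fun B : E => ‖P - B‖ ^ (2*m) * Real.log ‖P - B‖) A ![v, w]
      = 4 * qq2 m ⟪P - A, P - A⟫ * ⟪P - A, v⟫ * ⟪P - A, w⟫
        + 2 * qq1 m ⟪P - A, P - A⟫ * ⟪v, w⟫ := by
  classical
  set f := fun B : E => ‖P - B‖ ^ (2*m) * Real.log ‖P - B‖ with hf
  set J : E →L[ℝ] E →L[ℝ] ℝ :=
    (isBoundedBilinearMap_inner (𝕜 := ℝ) (E := E)).toContinuousLinearMap with hJ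
  have hJapp : ∀ x y : E, J x y = ⟪x, y⟫ := fun x y => rfl
  set F1 : E → (E →L[ℝ] ℝ) := fun B => (-2 * qq1 m ⟪P - B, P - B⟫) • (J (P - B)) with hF1def
  have hFd : ∀ B : E, B ≠ P → fderiv ℝ f B = F1 B := by
    intro B hB
    rw [(tps_hasFDerivAt m hm P B hB).fderiv]
    ext y
    simp only [hF1def, ContinuousLinearMap.smul_apply, innerSL_apply_apply, smul_eq_mul, hJapp]
  have hev : fderiv ℝ f =ᶠ[𝓝 A] F1 := by
    filter_upwards [isOpen_ne.mem_nhds hA] with B hB using hFd B hB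
  have hpos : (0:ℝ) < ⟪P - A, P - A⟫ := by
    rw [real_inner_self_eq_norm_sq]
    exact pow_pos (norm_pos_iff.mpr (sub_ne_zero.mpr (Ne.symm hA))) 2
  have hσ := hasFDerivAt_sigma P A
  have hc : HasFDerivAt (fun B : E => -2 * qq1 m ⟪P - B, P - B⟫)
      ((-2 * qq2 m ⟪P - A, P - A⟫) • ((-2 : ℝ) • (innerSL ℝ (P - A)))) A :=
    ((hasDerivAt_qq1 m hm hpos).const_mul (-2)).comp_hasFDerivAt (f := fun B : E => ⟪P - B, P - B⟫) A hσ
  have hsub : HasFDerivAt (fun B : E => P - B) (-(ContinuousLinearMap.id ℝ E)) A := by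
    simpa using (hasFDerivAt_const (𝕜 := ℝ) P A).fun_sub (hasFDerivAt_id (𝕜 := ℝ) A)
  have hL : HasFDerivAt (fun B : E => J (P - B)) (J.comp (-(ContinuousLinearMap.id ℝ E))) A :=
    J.hasFDerivAt.comp A hsub
  have hF1' := hc.fun_smul hL
  have h2 : fderiv ℝ (fderiv ℝ f) A = fderiv ℝ F1 A := hev.fderiv_eq
  rw [iteratedFDeriv_two_apply, h2, hF1'.fderiv]
  simp only [Matrix.cons_val_zero, Matrix.cons_val_one, Matrix.head_cons,
    ContinuousLinearMap.add_apply, ContinuousLinearMap.smul_apply,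
    ContinuousLinearMap.coe_comp', Function.comp_apply, ContinuousLinearMap.neg_apply,
    ContinuousLinearMap.coe_id', id_eq, ContinuousLinearMap.smulRight_apply,
    innerSL_apply_apply, smul_eq_mul, hJapp, inner_neg_left, inner_neg_right]
  ring

lemma sum_helper {d : ℕ} (c : Fin d → Fin d → ℝ) (i : Fin d) (x y : ℝ) :
    ∑ i', ∑ j', c i' j' * (x * (if i = i' then 1 else 0) * (if i = j' then 1 else 0)
        + y * (if i' = j' then 1 else 0))
      = x * c i i + y * ∑ j, c j j := by
  have h1 : ∀ i' : Fin d, ∑ j', c i' j' * (x * (if i = i' then 1 else 0) * (if i = j' then 1 else 0)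
      + y * (if i' = j' then 1 else 0))
      = (if i = i' then 1 else 0) * x * c i' i + y * c i' i' := by
    intro i'
    rw [Finset.sum_congr rfl (fun j' _ => by ring_nf :
      ∀ j' ∈ Finset.univ, c i' j' * (x * (if i = i' then 1 else 0) * (if i = j' then 1 else 0)
        + y * (if i' = j' then 1 else 0)) =
      (if i = j' then 1 else 0) * ((if i = i' then 1 else 0) * x * c i' j')
        + (if i' = j' then 1 else 0) * (y * c i' j'))]
    rw [Finset.sum_add_distrib]
    simp [Finset.sum_ite_eq]
  rw [Finset.sum_congr rfl fun i' _ => h1 i']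
  rw [Finset.sum_add_distrib]
  simp [Finset.sum_ite_eq, Finset.mul_sum]

lemma sum_helper2 {d : ℕ} (b : Fin d → ℝ) (i : Fin d) (z : ℝ) :
    ∑ j, b j * (z * (if i = j then 1 else 0)) = z * b i := by
  rw [Finset.sum_congr rfl (fun j _ => by ring_nf :
    ∀ j ∈ Finset.univ, b j * (z * (if i = j then 1 else 0))
      = (if i = j then 1 else 0) * (z * b j))]
  simp [Finset.sum_ite_eq]

open Classical in
/-- Let `d ≥ 2`, let constants `c_{ij}` satisfy the ellipticity condition,
`b ∈ ℝ^d`, `ρ ∈ ℝ`, `P ∈ ℝ^d`, and `k` even with `k ≥ 4`. The function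
`g(A) = Σ c_{ij} ∂²_{a_i a_j}[‖P−A‖^k log‖P−A‖] + Σ b_j ∂_{a_j}[‖P−A‖^k log‖P−A‖]
+ ρ‖P−A‖^k log‖P−A‖` for `A ≠ P` (derivatives in the center variable `A`, second
partials realized as the second iterated Fréchet derivative on standard basis vectors),
with `g(P) = 0`, is not analytic at `P`. -/
theorem elliptic_op_tps_not_analyticAt (d k : ℕ) (hd : 2 ≤ d)
    (hk : Even k) (hk4 : 4 ≤ k)
    (c : Fin d → Fin d → ℝ) (b : Fin d → ℝ) (ρ : ℝ)
    (hell : ∀ ξ : Fin d → ℝ, ξ ≠ 0 → (∑ i, ∑ j, c i j * ξ i * ξ j) ≠ 0)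
    (P : EuclideanSpace ℝ (Fin d)) :
    ¬ AnalyticAt ℝ
      (fun A : EuclideanSpace ℝ (Fin d) =>
        if A = P then (0 : ℝ)
        else
          (∑ i, ∑ j, c i j *
              iteratedFDeriv ℝ 2
                (fun B : EuclideanSpace ℝ (Fin d) => ‖P - B‖ ^ k * Real.log ‖P - B‖) A
                ![EuclideanSpace.single i 1, EuclideanSpace.single j 1]) +
            (∑ j, b j *
              fderiv ℝ
                (fun B : EuclideanSpace ℝ (Fin d) => ‖P - B‖ ^ k * Real.log ‖P - B‖) A
                (EuclideanSpace.single j 1)) +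
            ρ * (‖P - A‖ ^ k * Real.log ‖P - A‖)) P := by
  obtain ⟨m, rfl⟩ := hk
  have hm : 2 ≤ m := by omega
  simp only [show m + m = 2 * m from (two_mul m).symm]
  set f := fun B : EuclideanSpace ℝ (Fin d) => ‖P - B‖ ^ (2*m) * Real.log ‖P - B‖ with hfdef
  intro hg
  -- the key computation: for each basis direction the log-coefficient must vanish
  have key : ∀ i : Fin d,
      4*(m:ℝ)*((m:ℝ)-1)*c i i + 2*(m:ℝ)*(∑ j, c j j) = 0 := by
    intro i
    set v : EuclideanSpace ℝ (Fin d) := EuclideanSpace.single i (1:ℝ) with hvdef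
    have hvn : ‖v‖ = 1 := by simp [hvdef]
    have hvv : ⟪v, v⟫ = 1 := by
      rw [real_inner_self_eq_norm_sq, hvn]; norm_num
    have hss : ∀ i' j' : Fin d,
        ⟪(EuclideanSpace.single i' (1:ℝ) : EuclideanSpace ℝ (Fin d)),
          EuclideanSpace.single j' (1:ℝ)⟫ = (if i' = j' then 1 else 0) := by
      intro i' j'
      simp [EuclideanSpace.inner_single_left, EuclideanSpace.single_apply, eq_comm]
    -- main pointwise formula along the line through P in direction v
    have hGt : ∀ t : ℝ, t ≠ 0 →
        (if P + t • v = P then (0:ℝ) else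
          (∑ i', ∑ j', c i' j' * iteratedFDeriv ℝ 2 f (P + t • v)
              ![EuclideanSpace.single i' 1, EuclideanSpace.single j' 1]) +
            (∑ j, b j * fderiv ℝ f (P + t • v) (EuclideanSpace.single j 1)) +
            ρ * (‖P - (P + t • v)‖ ^ (2*m) * Real.log ‖P - (P + t • v)‖))
        = ((2*(2*(m:ℝ)-1)*c i i + (∑ j, c j j)) * t^(2*m-2) + b i * t^(2*m-1))
          + ((4*(m:ℝ)*((m:ℝ)-1)*c i i + 2*(m:ℝ)*(∑ j, c j j)) * t^(2*m-2)
              + (2*(m:ℝ)*b i) * t^(2*m-1) + ρ * t^(2*m)) * Real.log |t| := by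
      intro t ht
      have hA : P + t • v ≠ P := by
        intro h
        rcases smul_eq_zero.mp (add_eq_left.mp h) with h' | h'
        · exact ht h'
        · rw [h'] at hvn; simp at hvn
      have hPA : P - (P + t • v) = (-t) • v := by
        rw [sub_add_cancel_left, neg_smul]
      have hσt : ⟪P - (P + t • v), P - (P + t • v)⟫ = t^2 := by
        rw [hPA, real_inner_smul_left, real_inner_smul_right, hvv]; ring
      have hinner : ∀ j : Fin d,
          ⟪P - (P + t • v), (EuclideanSpace.single j (1:ℝ) : EuclideanSpace ℝ (Fin d))⟫
            = -t * (if i = j then 1 else 0) := by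
        intro j
        rw [hPA, real_inner_smul_left, hvdef, hss i j]
      have hnorm : ‖P - (P + t • v)‖ = |t| := by
        rw [hPA, norm_smul, hvn, mul_one, Real.norm_eq_abs, abs_neg]
      have h2nd : ∀ i' j' : Fin d, iteratedFDeriv ℝ 2 f (P + t • v)
            ![EuclideanSpace.single i' 1, EuclideanSpace.single j' 1]
          = (4 * (qq2 m (t^2) * t^2)) * (if i = i' then 1 else 0) * (if i = j' then 1 else 0)
            + (2 * qq1 m (t^2)) * (if i' = j' then 1 else 0) := by
        intro i' j'
        rw [hfdef, tps_second m hm P _ hA, hσt, hinner i', hinner j', hss i' j']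
        ring
      have h1st : ∀ j : Fin d, fderiv ℝ f (P + t • v) (EuclideanSpace.single j 1)
          = (2 * t * qq1 m (t^2)) * (if i = j then 1 else 0) := by
        intro j
        rw [hfdef, (tps_hasFDerivAt m hm P _ hA).fderiv]
        simp only [ContinuousLinearMap.smul_apply, innerSL_apply_apply, smul_eq_mul]
        rw [hσt, hinner j]
        ring
      rw [if_neg hA]
      simp only [h2nd, h1st]
      rw [sum_helper c i (4 * (qq2 m (t^2) * t^2)) (2 * qq1 m (t^2)),
        sum_helper2 b i (2 * t * qq1 m (t^2)), hnorm,
        Even.pow_abs (even_two_mul m), Real.log_abs]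
      -- now a scalar identity
      have hq1t : qq1 m (t^2) = ((m:ℝ) * (2 * Real.log t) + 1) * t^(2*m-2) / 2 := by
        unfold qq1
        rw [Real.log_pow, ← pow_mul, show 2*(m-1) = 2*m-2 by omega]
        push_cast
        ring
      have hq2t : qq2 m (t^2) * t^2
          = ((m:ℝ) * ((m:ℝ)-1) * (2 * Real.log t) + (2*(m:ℝ)-1)) * t^(2*m-2) / 2 := by
        unfold qq2
        have hp : ((t:ℝ)^2)^(m-2) * t^2 = t^(2*m-2) := by
          rw [← pow_succ, ← pow_mul, show 2*(m-2+1) = 2*m-2 by omega]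
        rw [Real.log_pow, div_mul_eq_mul_div, mul_assoc, hp]
        push_cast
        ring
      have hp1 : (t:ℝ)^(2*m) = t^(2*m-2) * t^2 := by
        rw [← pow_add, show 2*m-2+2 = 2*m by omega]
      have hp2 : (t:ℝ)^(2*m-1) = t^(2*m-2) * t := by
        rw [← pow_succ, show 2*m-2+1 = 2*m-1 by omega]
      rw [hq1t, hq2t, hp1, hp2]
      ring
    -- analyticity along the line
    have h00 : (fun t : ℝ => P + t • v) 0 = P := by simp
    have hline : AnalyticAt ℝ (fun t : ℝ => P + t • v) 0 :=
      analyticAt_const.add (((ContinuousLinearMap.id ℝ ℝ).smulRight v).analyticAt 0)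
    have hcomp := hg.comp_of_eq hline h00
    have hpoly : AnalyticAt ℝ (fun t : ℝ =>
        (2*(2*(m:ℝ)-1)*c i i + (∑ j, c j j)) * t^(2*m-2) + b i * t^(2*m-1)) 0 :=
      (analyticAt_const.mul ((analyticAt_id (𝕜 := ℝ) (z := (0:ℝ))).pow _)).add
        (analyticAt_const.mul ((analyticAt_id (𝕜 := ℝ) (z := (0:ℝ))).pow _))
    have hpsi := hcomp.sub hpoly
    have ha := log_coeff_zero (n := 2*m-2) (by omega)
      (a := 4*(m:ℝ)*((m:ℝ)-1)*c i i + 2*(m:ℝ)*(∑ j, c j j))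
      (b := 2*(m:ℝ)*b i) (c := ρ) hpsi ?_
    · exact ha
    · filter_upwards [self_mem_nhdsWithin] with t ht
      have ht2 : t ≠ 0 := ht
      simp only [Pi.sub_apply, Function.comp_apply]
      rw [hGt t ht2, show 2*m-2+1 = 2*m-1 by omega, show 2*m-2+2 = 2*m by omega]
      ring
  -- collect : trace must vanish
  have hmr : (2:ℝ) ≤ (m:ℝ) := by exact_mod_cast hm
  have hdr : (2:ℝ) ≤ (d:ℝ) := by exact_mod_cast hd
  have hT : (∑ j, c j j) = 0 := by
    have hsum : ∑ i, (4*(m:ℝ)*((m:ℝ)-1)*c i i + 2*(m:ℝ)*(∑ j, c j j)) = 0 :=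
      Finset.sum_eq_zero fun i _ => key i
    rw [Finset.sum_add_distrib, ← Finset.mul_sum, Finset.sum_const, Finset.card_univ,
      Fintype.card_fin, nsmul_eq_mul] at hsum
    have h2 : (∑ j, c j j) * (4*(m:ℝ)*((m:ℝ)-1) + (d:ℝ)*(2*(m:ℝ))) = 0 := by
      linear_combination hsum
    have h3 : (0:ℝ) < 4*(m:ℝ)*((m:ℝ)-1) + (d:ℝ)*(2*(m:ℝ)) := by nlinarith
    exact (mul_eq_zero.mp h2).resolve_right (ne_of_gt h3)
  have i0 : Fin d := ⟨0, by omega⟩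
  have hc00 : c i0 i0 = 0 := by
    have hk0 := key i0
    rw [hT, mul_zero, add_zero] at hk0
    have h4 : (4*(m:ℝ)*((m:ℝ)-1)) ≠ 0 := by nlinarith
    exact (mul_eq_zero.mp hk0).resolve_left h4
  -- contradiction with ellipticity
  refine hell (fun j => if j = i0 then (1:ℝ) else 0) ?_ ?_
  · intro h
    have := congrFun h i0
    simp at this
  · have hfin : ∑ i, ∑ j, c i j * (if i = i0 then (1:ℝ) else 0) * (if j = i0 then 1 else 0)
        = c i0 i0 := by
      simp [mul_ite, ite_mul, mul_zero, zero_mul, mul_one, one_mul, Finset.sum_ite_eq']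
    simpa [hfin] using hc00
end
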